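/- With m, A in a field k of characteristic ≠ 2, s² = m² - 4, w² = (m+2+A)² - 4(m-2), u = (m+s)/2, q₁(x) = x² + ((-A+s-w)/2)x + (m+s)/2, q₂(x) = x² + ((-A+s+w)/2)x + (m+s)/2: the product of discriminants disc(q₁)·disc(q₂) = (A² - 4(m-2))·(u-1)², and the resultant Res(q₁, q₂) = w²·u. -/

import Mathlib

/-- Discriminant of a monic quadratic `x² + bx + c`. -/
def disc2 {K : Type*} [Field K] (b c : K) : K := b ^ 2 - 4 * c

/-- Resultant of two monic quadratics `x² + b₁x + c₁` and `x² + b₂x + c₂`. -/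
def res2 {K : Type*} [Field K] (b₁ c₁ b₂ c₂ : K) : K :=
  (b₂ - b₁) ^ 2 * c₁ - (b₂ - b₁) * (c₂ - c₁) * b₁ + (c₂ - c₁) ^ 2

/-- with `s² = m² - 4`, `w² = (m+2+A)² - 4(m-2)`, `u = (m+s)/2`,
`q₁(x) = x² + ((-A+s-w)/2)x + (m+s)/2` and `q₂(x) = x² + ((-A+s+w)/2)x + (m+s)/2`:
`disc(q₁)·disc(q₂) = (A² - 4(m-2))·(u-1)²` and `Res(q₁, q₂) = w²·u`. -/
theorem disc_res_q1_q2 {k K : Type*} [Field k] [Field K] [Algebra k K]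
    (h2 : (2 : k) ≠ 0) (m A : k)
    (s w : K) (hs : s ^ 2 = algebraMap k K (m ^ 2 - 4))
    (hw : w ^ 2 = algebraMap k K ((m + 2 + A) ^ 2 - 4 * (m - 2))) :
    let M := algebraMap k K m
    let A' := algebraMap k K A
    let u := (M + s) / 2
    disc2 ((-A' + s - w) / 2) ((M + s) / 2) * disc2 ((-A' + s + w) / 2) ((M + s) / 2)
        = algebraMap k K (A ^ 2 - 4 * (m - 2)) * (u - 1) ^ 2 ∧
    res2 ((-A' + s - w) / 2) ((M + s) / 2) ((-A' + s + w) / 2) ((M + s) / 2)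
        = w ^ 2 * u := by
  intro M A' u
  have hM : algebraMap k K m = M := rfl
  have hA : algebraMap k K A = A' := rfl
  have hs' : s ^ 2 = M ^ 2 - 4 := by
    rw [hs]; push_cast [map_sub, map_pow, map_ofNat]; rfl
  have hw' : w ^ 2 = (M + 2 + A') ^ 2 - 4 * (M - 2) := by
    rw [hw]; push_cast [map_sub, map_add, map_mul, map_pow, map_ofNat]; rfl
  have hrhs : algebraMap k K (A ^ 2 - 4 * (m - 2)) = A' ^ 2 - 4 * (M - 2) := by
    push_cast [map_sub, map_mul, map_pow, map_ofNat]; rfl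
  have h2K : (2 : K) ≠ 0 := by
    have : algebraMap k K 2 ≠ 0 := (map_ne_zero _).mpr h2
    rwa [map_ofNat] at this
  constructor
  · rw [hrhs]
    simp only [disc2, u]
    field_simp
    linear_combination ((1:K)*s^2 + (-4)*A'*s + (2)*A'^2 + (-2)*w^2 + (-16)*s + (32)*A' + (28) + (1)*M^2) * hs' + ((4:K)*A'*s + (-1)*A'^2 + (1)*w^2 + (-16)*M + (-16)*s + (-1)*M^2 + (20) + (2)*A'*M + (4)*A') * hw'
  · simp only [res2, u]
    field_simp
    ring
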